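/- Let L be a Lie algebra over an arbitrary field K with basis (v_i)_{i∈I}, and let S(L) be its symmetric algebra with its Poisson bracket. The following are equivalent: (1) L is abelian; (2) S(L) is strongly Lie nilpotent; (3) S(L) is Lie nilpotent. -/

import Mathlib

open MvPolynomial

/-- The lower central series of a Poisson algebra `S` with bracket `P`:
`γ 0 = S` (corresponding to `γ_1`) and `γ (n+1)` is the `K`-span of all brackets `{a, b}`
with `a ∈ γ n`, `b ∈ S`. -/
def poissonLowerCentralSeries (K S : Type*) [Field K] [CommRing S] [Algebra K S]
    (P : S →ₗ[K] S →ₗ[K] S) : ℕ → Submodule K S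
  | 0 => ⊤
  | n + 1 => Submodule.span K
      {x : S | ∃ a ∈ poissonLowerCentralSeries K S P n, ∃ b : S, x = P a b}

/-- The upper Lie powers of a Poisson algebra `S` with bracket `P`: `S^(0) = S` and
`S^(n+1)` is the `K`-span of all products `{a, b} * c` with `a ∈ S^(n)`, `b, c ∈ S`. -/
def poissonUpperLiePower (K S : Type*) [Field K] [CommRing S] [Algebra K S]
    (P : S →ₗ[K] S →ₗ[K] S) : ℕ → Submodule K S
  | 0 => ⊤
  | n + 1 => Submodule.span K
      {x : S | ∃ a ∈ poissonUpperLiePower K S P n, ∃ b c : S, x = P a b * c}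

/-- A linear map on a polynomial algebra satisfying the Leibniz rule and vanishing on all
variables is zero. -/
lemma poissonAux_derivZero {K I : Type*} [Field K]
    (D : MvPolynomial I K →ₗ[K] MvPolynomial I K)
    (hd : ∀ g h, D (g * h) = g * D h + h * D g) (hx : ∀ k, D (X k) = 0) :
    ∀ f, D f = 0 := by
  have h1 : D 1 = 0 := by
    have h := hd 1 1
    simp only [mul_one, one_mul] at h
    exact left_eq_add.mp h
  intro f
  induction f using MvPolynomial.induction_on with
  | C a =>
      have hC : (C a : MvPolynomial I K) = a • 1 := by rw [smul_eq_C_mul, mul_one]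
      rw [hC, map_smul, h1, smul_zero]
  | add p q hp hq => rw [map_add, hp, hq, add_zero]
  | mul_X p k hp => rw [hd, hx, hp, mul_zero, mul_zero, add_zero]

section Aux

variable {K L I : Type*} [Field K] [LieRing L] [LieAlgebra K L] (B : Module.Basis I K L)
    (P : MvPolynomial I K →ₗ[K] MvPolynomial I K →ₗ[K] MvPolynomial I K)

/-- The second-slot Leibniz rule, from antisymmetry and the first-slot Leibniz rule. -/
lemma poissonAux_leib2 (hanti : ∀ f g, P f g = - P g f)
    (hleib : ∀ f g h, P (f * g) h = f * P g h + g * P f h) :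
    ∀ f g h, P f (g * h) = g * P f h + h * P f g := by
  intro f g h
  rw [hanti f (g * h), hleib g h f, hanti f h, hanti f g]
  ring

/-- `P` vanishes identically in the first slot on (powers of) a Poisson-central element. -/
lemma poissonAux_pow_central (hanti : ∀ f g, P f g = - P g f)
    (hleib : ∀ f g h, P (f * g) h = f * P g h + g * P f h)
    {z : MvPolynomial I K} (hz : ∀ f, P z f = 0) :
    ∀ (n : ℕ) (f : MvPolynomial I K), P (z ^ n) f = 0 := by
  intro n
  induction n with
  | zero =>
      intro f
      have h := hleib 1 1 f
      simp only [mul_one, one_mul] at h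
      rw [pow_zero]
      exact left_eq_add.mp h
  | succ n ih =>
      intro f
      rw [pow_succ, hleib, ih, hz, mul_zero, mul_zero, add_zero]

/-- If L is abelian, the Poisson bracket vanishes identically. -/
lemma poissonAux_abelian_zero
    (hanti : ∀ f g, P f g = - P g f)
    (hleib : ∀ f g h, P (f * g) h = f * P g h + g * P f h)
    (hX : ∀ i j, P (X i) (X j) = B.constr K (fun i => (X i : MvPolynomial I K)) ⁅B i, B j⁆)
    (hab : IsLieAbelian L) : ∀ f g, P f g = 0 := by
  have step1 : ∀ (k : I) (g : MvPolynomial I K), P g (X k) = 0 := by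
    intro k
    refine poissonAux_derivZero (P.flip (X k)) (fun g h => ?_) (fun j => ?_)
    · exact hleib g h (X k)
    · have : ⁅B j, B k⁆ = 0 := trivial_lie_zero _ _ _ _
      simp only [LinearMap.flip_apply, hX j k, this, map_zero]
  intro f
  refine poissonAux_derivZero (P f) (fun g h => ?_) (fun k => ?_)
  · exact poissonAux_leib2 P hanti hleib f g h
  · exact step1 k f

/-- Main auxiliary lemma: any "Poisson series" `T` with `T 0 = ⊤`, closed under the step
`a ∈ T n → P a b ∈ T (n+1)`, which reaches `⊥`, forces `L` to be abelian. -/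
lemma poissonAux_series
    (halt : ∀ f, P f f = 0)
    (hanti : ∀ f g, P f g = - P g f)
    (hleib : ∀ f g h, P (f * g) h = f * P g h + g * P f h)
    (hX : ∀ i j, P (X i) (X j) = B.constr K (fun i => (X i : MvPolynomial I K)) ⁅B i, B j⁆)
    (T : ℕ → Submodule K (MvPolynomial I K)) (hT0 : T 0 = ⊤)
    (hTstep : ∀ (n : ℕ) (a b : MvPolynomial I K), a ∈ T n → P a b ∈ T (n + 1))
    (hbot : ∃ s, T s = ⊥) : IsLieAbelian L := by
  classical
  obtain ⟨s, hTs⟩ := hbot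
  set θ : L →ₗ[K] MvPolynomial I K := B.constr K (fun i => (X i : MvPolynomial I K)) with hθ
  have hθX : ∀ i, θ (B i) = X i := fun i => B.constr_basis K _ i
  -- injectivity of θ
  have hθinj : ∀ v : L, θ v = 0 → v = 0 := by
    intro v hv
    have hrepr : θ v = Finsupp.linearCombination K (X : I → MvPolynomial I K) (B.repr v) := by
      rw [hθ, Module.Basis.constr_apply, Finsupp.linearCombination_apply]
    rw [hrepr] at hv
    have h0 : (Finsupp.linearCombination K (X : I → MvPolynomial I K)) (B.repr v)
        = (Finsupp.linearCombination K (X : I → MvPolynomial I K)) 0 := by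
      rw [hv, map_zero]
    have := (MvPolynomial.linearIndependent_X I K) h0
    have hv0 : B.repr v = 0 := this
    have := congrArg (B.repr.symm) hv0
    simpa using this
  -- the bracket identity for θ
  have hPθ : ∀ u w : L, P (θ u) (θ w) = θ ⁅u, w⁆ := by
    have h1 : ∀ (w : L) (i : I), P (X i) (θ w) = θ ⁅B i, w⁆ := by
      intro w i
      have heq : (P (X i)) ∘ₗ θ = θ ∘ₗ ((LieAlgebra.ad K L (B i) : L →ₗ[K] L)) := by
        refine B.ext fun j => ?_
        simp only [LinearMap.comp_apply, hθX, LieAlgebra.ad_apply]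
        rw [hX i j]
      have := DFunLike.congr_fun heq w
      simpa using this
    intro u w
    have heq : (P.flip (θ w)) ∘ₗ θ = -(θ ∘ₗ ((LieAlgebra.ad K L w : L →ₗ[K] L))) := by
      refine B.ext fun i => ?_
      simp only [LinearMap.comp_apply, LinearMap.neg_apply, LinearMap.flip_apply, hθX,
        LieAlgebra.ad_apply]
      rw [h1 w i, ← map_neg, lie_skew]
    have := DFunLike.congr_fun heq u
    simp only [LinearMap.comp_apply, LinearMap.neg_apply, LinearMap.flip_apply,
      LieAlgebra.ad_apply] at this
    rw [this, ← map_neg, lie_skew]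
  -- θ maps the lower central series of L into T
  have hθLCS : ∀ n, ∀ z ∈ LieModule.lowerCentralSeries K L L n, θ z ∈ T n := by
    intro n
    induction n with
    | zero => intro z _; rw [hT0]; trivial
    | succ n ih =>
        intro z hz
        rw [LieModule.lowerCentralSeries_succ] at hz
        have hz' : z ∈ Submodule.span K
            {m : L | ∃ x ∈ (⊤ : LieIdeal K L),
              ∃ w ∈ LieModule.lowerCentralSeries K L L n, ⁅x, w⁆ = m} := by
          rw [← LieSubmodule.lieIdeal_oper_eq_linear_span']
          exact hz
        refine Submodule.span_induction (p := fun m _ => θ m ∈ T (n + 1)) ?_ ?_ ?_ ?_ hz'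
        · rintro m ⟨x, -, w, hw, rfl⟩
          show θ ⁅x, w⁆ ∈ T (n + 1)
          have hmem : P (θ w) (θ x) ∈ T (n + 1) := hTstep n _ _ (ih w hw)
          have hrw : θ ⁅x, w⁆ = -(P (θ w) (θ x)) := by
            rw [hPθ w x, ← map_neg, lie_skew]
          rw [hrw]
          exact neg_mem hmem
        · show θ (0 : L) ∈ T (n + 1)
          rw [map_zero]; exact zero_mem _
        · intro a b _ _ ha hb
          show θ (a + b) ∈ T (n + 1)
          rw [map_add]; exact add_mem ha hb
        · intro a m _ hm
          show θ (a • m) ∈ T (n + 1)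
          rw [map_smul]; exact Submodule.smul_mem _ a hm
  -- L is nilpotent
  have hLCSbot : LieModule.lowerCentralSeries K L L s = ⊥ := by
    rw [LieSubmodule.eq_bot_iff]
    intro m hm
    refine hθinj m ?_
    have := hθLCS s m hm
    rwa [hTs, Submodule.mem_bot] at this
  by_contra habs
  -- the first term of the lower central series is nonzero
  have h1ne : LieModule.lowerCentralSeries K L L 1 ≠ ⊥ := by
    intro h
    refine habs ⟨fun x y => ?_⟩
    have hmem : ⁅x, y⁆ ∈ LieModule.lowerCentralSeries K L L 1 := by
      rw [LieModule.lowerCentralSeries_succ]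
      exact LieSubmodule.lie_mem_lie (LieSubmodule.mem_top x)
        (by rw [LieModule.lowerCentralSeries_zero]; trivial)
    rw [h] at hmem
    exact (LieSubmodule.mem_bot _).mp hmem
  -- find the last nonzero term
  have hex : ∃ n, LieModule.lowerCentralSeries K L L n = ⊥ := ⟨s, hLCSbot⟩
  set s₀ := Nat.find hex with hs₀def
  have hs₀ : LieModule.lowerCentralSeries K L L s₀ = ⊥ := Nat.find_spec hex
  have h2 : 2 ≤ s₀ := by
    by_contra h
    push_neg at h
    have hle : s₀ ≤ 1 := by omega
    have : LieModule.lowerCentralSeries K L L 1 ≤ LieModule.lowerCentralSeries K L L s₀ :=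
      LieModule.antitone_lowerCentralSeries K L L hle
    rw [hs₀] at this
    exact h1ne (le_bot_iff.mp this)
  obtain ⟨b, hb⟩ : ∃ b, s₀ = b + 2 := ⟨s₀ - 2, by omega⟩
  have hcne : LieModule.lowerCentralSeries K L L (b + 1) ≠ ⊥ :=
    Nat.find_min hex (by omega)
  have hcbot : LieModule.lowerCentralSeries K L L (b + 2) = ⊥ := by rw [← hb]; exact hs₀
  -- extract a nonzero central commutator
  obtain ⟨u, w, hw, hzne⟩ :
      ∃ (u : L) (w : L), w ∈ LieModule.lowerCentralSeries K L L b ∧ ⁅u, w⁆ ≠ 0 := by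
    by_contra h
    push_neg at h
    refine hcne ?_
    rw [LieSubmodule.eq_bot_iff]
    intro m hm
    rw [LieModule.lowerCentralSeries_succ] at hm
    have hm' : m ∈ Submodule.span K
        {m : L | ∃ x ∈ (⊤ : LieIdeal K L),
          ∃ w ∈ LieModule.lowerCentralSeries K L L b, ⁅x, w⁆ = m} := by
      rw [← LieSubmodule.lieIdeal_oper_eq_linear_span']
      exact hm
    refine Submodule.span_induction (p := fun m _ => m = 0) ?_ rfl ?_ ?_ hm'
    · rintro m ⟨x, -, w, hw, rfl⟩; exact h x w hw
    · intro a b _ _ ha hb; rw [ha, hb, add_zero]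
    · intro a x _ hx; rw [hx, smul_zero]
  set z := ⁅u, w⁆ with hzdef
  have hzmem : z ∈ LieModule.lowerCentralSeries K L L (b + 1) := by
    rw [LieModule.lowerCentralSeries_succ]
    exact LieSubmodule.lie_mem_lie (LieSubmodule.mem_top u) hw
  have hcentral : ∀ t : L, ⁅z, t⁆ = 0 := by
    intro t
    have hmem : ⁅t, z⁆ ∈ LieModule.lowerCentralSeries K L L (b + 2) := by
      rw [LieModule.lowerCentralSeries_succ]
      exact LieSubmodule.lie_mem_lie (LieSubmodule.mem_top t) hzmem
    rw [hcbot] at hmem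
    have h0 : ⁅t, z⁆ = 0 := (LieSubmodule.mem_bot _).mp hmem
    rw [← lie_skew, h0, neg_zero]
  -- transfer to the Poisson algebra
  set x := θ u with hxdef
  set y := θ w with hydef
  set ζ := θ z with hζdef
  have hPxy : P x y = ζ := hPθ u w
  have hζzero : ∀ f, P ζ f = 0 := by
    refine poissonAux_derivZero (P ζ) (fun g h => poissonAux_leib2 P hanti hleib ζ g h)
      (fun k => ?_)
    rw [hζdef, ← hθX k, hPθ, hcentral, map_zero]
  have hζpow : ∀ (n : ℕ) (f : MvPolynomial I K), P (ζ ^ n) f = 0 :=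
    poissonAux_pow_central P hanti hleib hζzero
  have hkey : ∀ n : ℕ, P (x * ζ ^ n) (x * y) = x * ζ ^ (n + 1) := by
    intro n
    rw [poissonAux_leib2 P hanti hleib _ x y, hleib x (ζ ^ n) y, hleib x (ζ ^ n) x,
      hζpow, hζpow, halt, hPxy]
    ring
  have hchain : ∀ n : ℕ, x * ζ ^ n ∈ T n := by
    intro n
    induction n with
    | zero => rw [hT0]; trivial
    | succ n ih =>
        have := hTstep n (x * ζ ^ n) (x * y) ih
        rwa [hkey n] at this
  have hcontr := hchain s
  rw [hTs, Submodule.mem_bot] at hcontr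
  have hune : u ≠ 0 := by
    intro h; exact hzne (by rw [hzdef, h, zero_lie])
  have hxne : x ≠ 0 := fun h => hune (hθinj u h)
  have hζne : ζ ≠ 0 := fun h => hzne (hθinj z h)
  exact (mul_ne_zero hxne (pow_ne_zero s hζne)) hcontr

end Aux

/-- For a Lie algebra `L` with basis `(v_i)` over an arbitrary field `K`, identify the
symmetric algebra `S(L)` with the polynomial algebra `K[X_i]`, let `θ : L → S(L)` be the
linear map with `θ(v_i) = X_i`, and let `{·,·}` be the Poisson bracket, i.e. the unique
bilinear, alternating map satisfying the Leibniz rule with `{X_i, X_j} = θ([v_i, v_j])`.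
The following are equivalent: `L` is abelian; `S(L)` is strongly Lie nilpotent; `S(L)` is
Lie nilpotent. -/
theorem symmetricAlgebra_lieNilpotent_iff_abelian
    {K L I : Type*} [Field K] [LieRing L] [LieAlgebra K L] (B : Module.Basis I K L)
    (P : MvPolynomial I K →ₗ[K] MvPolynomial I K →ₗ[K] MvPolynomial I K)
    (halt : ∀ f, P f f = 0)
    (hanti : ∀ f g, P f g = - P g f)
    (hjac : ∀ f g h, P f (P g h) = P (P f g) h + P g (P f h))
    (hleib : ∀ f g h, P (f * g) h = f * P g h + g * P f h)
    (hX : ∀ i j, P (X i) (X j) = B.constr K (fun i => (X i : MvPolynomial I K)) ⁅B i, B j⁆) :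
    ((∃ s : ℕ, poissonUpperLiePower K (MvPolynomial I K) P s = ⊥) ↔ IsLieAbelian L) ∧
    ((∃ s : ℕ, poissonLowerCentralSeries K (MvPolynomial I K) P s = ⊥) ↔ IsLieAbelian L) := by
  constructor
  · constructor
    · intro hbot
      refine poissonAux_series B P halt hanti hleib hX
        (poissonUpperLiePower K (MvPolynomial I K) P) rfl ?_ hbot
      intro n a b ha
      exact Submodule.subset_span ⟨a, ha, b, 1, (mul_one _).symm⟩
    · intro hab
      refine ⟨1, le_bot_iff.mp ?_⟩
      rw [show poissonUpperLiePower K (MvPolynomial I K) P 1 = Submodule.span K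
        {x : MvPolynomial I K | ∃ a ∈ poissonUpperLiePower K (MvPolynomial I K) P 0,
          ∃ b c : MvPolynomial I K, x = P a b * c} from rfl]
      refine Submodule.span_le.mpr ?_
      rintro x ⟨a, -, b, c, rfl⟩
      have h0 := poissonAux_abelian_zero B P hanti hleib hX hab a b
      simp [h0]
  · constructor
    · intro hbot
      refine poissonAux_series B P halt hanti hleib hX
        (poissonLowerCentralSeries K (MvPolynomial I K) P) rfl ?_ hbot
      intro n a b ha
      exact Submodule.subset_span ⟨a, ha, b, rfl⟩
    · intro hab
      refine ⟨1, le_bot_iff.mp ?_⟩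
      rw [show poissonLowerCentralSeries K (MvPolynomial I K) P 1 = Submodule.span K
        {x : MvPolynomial I K | ∃ a ∈ poissonLowerCentralSeries K (MvPolynomial I K) P 0,
          ∃ b : MvPolynomial I K, x = P a b} from rfl]
      refine Submodule.span_le.mpr ?_
      rintro x ⟨a, -, b, rfl⟩
      have h0 := poissonAux_abelian_zero B P hanti hleib hX hab a b
      simp [h0]
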